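/- For every graph F with at least one edge, the limit π(F) = lim_{n→∞} ex_n(F)/C(n,2) exists and equals 1 − 1/(χ(F) − 1), where χ(F) is the chromatic number of F. -/

import Mathlib

open Filter Topology

attribute [local instance] Classical.propDecidable

/-- `G` contains a copy of `F`. -/
def Contains {α β : Type*} (F : SimpleGraph α) (G : SimpleGraph β) : Prop :=
  ∃ f : α ↪ β, ∀ a b, F.Adj a b → G.Adj (f a) (f b)

/-- Number of edges of a graph. -/
noncomputable def ecard {V : Type*} (G : SimpleGraph V) : ℕ := G.edgeSet.ncard

/-- The extremal number `ex_n(F)`. -/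
noncomputable def exNum (n : ℕ) {α : Type*} (F : SimpleGraph α) : ℕ :=
  sSup {m | ∃ H : SimpleGraph (Fin n), ¬ Contains F H ∧ ecard H = m}

/-- The generalized extremal number `ex_G(F)`. -/
noncomputable def exRel {V α : Type*} (G : SimpleGraph V) (F : SimpleGraph α) : ℕ :=
  sSup {m | ∃ H ≤ G, ¬ Contains F H ∧ ecard H = m}

/-- maximum size of a `t`-colorable subgraph of `G` -/
noncomputable def colRel {V : Type*} (G : SimpleGraph V) (t : ℕ) : ℕ :=
  sSup {m | ∃ H ≤ G, H.Colorable t ∧ ecard H = m}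

/-- probability that `G(n,p)` satisfies `P` -/
noncomputable def gnpProb (n : ℕ) (p : ℝ) (P : SimpleGraph (Fin n) → Prop) : ℝ :=
  ∑ᶠ G : SimpleGraph (Fin n),
    if P G then p ^ ecard G * (1 - p) ^ (n.choose 2 - ecard G) else 0

/-- number of labeled copies of `F` in `G` -/
noncomputable def numCopies {α V : Type*} (F : SimpleGraph α) (G : SimpleGraph V) : ℕ :=
  Set.ncard {f : α ↪ V | ∀ a b, F.Adj a b → G.Adj (f a) (f b)}

/-- expected number of labeled copies of `F` in `G(n,p)` -/
noncomputable def gnpExpCopies (n : ℕ) (p : ℝ) {α : Type*} (F : SimpleGraph α) : ℝ :=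
  ∑ᶠ G : SimpleGraph (Fin n),
    p ^ ecard G * (1 - p) ^ (n.choose 2 - ecard G) * numCopies F G

noncomputable def d2 {V : Type*} {F : SimpleGraph V} (H : F.Subgraph) : ℝ :=
  if 2 < H.verts.ncard then ((H.edgeSet.ncard : ℝ) - 1) / ((H.verts.ncard : ℝ) - 2)
  else 1/2

/-- the 2-density `m₂(F)` -/
noncomputable def m2 {V : Type*} (F : SimpleGraph V) : ℝ :=
  sSup {x | ∃ H : F.Subgraph, H.edgeSet.Nonempty ∧ d2 H = x}

/-- the asymmetric 2-density `m₂(F₁,F₂)` -/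
noncomputable def m2Asym {V W : Type*} (F₁ : SimpleGraph V) (F₂ : SimpleGraph W) : ℝ :=
  sSup {x | ∃ H : F₂.Subgraph, H.edgeSet.Nonempty ∧
    x = (H.edgeSet.ncard : ℝ) / ((H.verts.ncard : ℝ) - 2 + 1 / m2 F₁)}

/-- size of the cut given by a colouring `c` -/
noncomputable def cutSize {V : Type*} (G : SimpleGraph V) {t : ℕ} (c : V → Fin t) : ℕ :=
  Set.ncard {e ∈ G.edgeSet | ¬ (e.map c).IsDiag}

/-- a colouring is balanced if all colour classes have sizes differing by at most one -/
def BalancedPartition {V : Type*} [Fintype V] {t : ℕ} (c : V → Fin t) : Prop :=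
  ∀ i j : Fin t, (Finset.univ.filter fun v => c v = i).card ≤
    (Finset.univ.filter fun v => c v = j).card + 1


lemma contains_trans {α β γ : Type*} {F : SimpleGraph α} {G : SimpleGraph β}
    {H : SimpleGraph γ} (h1 : Contains F G) (h2 : Contains G H) : Contains F H := by
  obtain ⟨f, hf⟩ := h1; obtain ⟨g, hg⟩ := h2
  exact ⟨f.trans g, fun a b hab => hg _ _ (hf _ _ hab)⟩

lemma contains_of_le {β : Type*} {G H : SimpleGraph β} (h : G ≤ H) :
    Contains G H := ⟨Function.Embedding.refl β, fun a b hab => h hab⟩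

lemma contains_induce {α β : Type*} {F : SimpleGraph α} {G : SimpleGraph β}
    (s : Set β) (h : Contains F (G.induce s)) : Contains F G := by
  obtain ⟨f, hf⟩ := h
  exact ⟨f.trans (Function.Embedding.subtype _), fun a b hab => hf a b hab⟩

/-- complete multipartite graph with `q` parts of size `t` -/
def KK (q t : ℕ) : SimpleGraph (Fin q × Fin t) where
  Adj a b := a.1 ≠ b.1
  symm := ⟨fun a b h => h.symm⟩
  loopless := ⟨fun a h => h rfl⟩

lemma contains_KK_of_colorable {α : Type*} [Fintype α] {F : SimpleGraph α} {q : ℕ}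
    (hc : F.Colorable q) (t : ℕ) (ht : Fintype.card α ≤ t) : Contains F (KK q t) := by
  obtain ⟨c⟩ := hc
  obtain ⟨e⟩ : Nonempty (α ↪ Fin t) := by
    have := Fintype.equivFin α
    exact ⟨this.toEmbedding.trans (Fin.castLEEmb ht)⟩
  refine ⟨⟨fun a => (c a, e a), ?_⟩, ?_⟩
  · intro a b hab
    simp only [Prod.mk.injEq] at hab
    exact e.injective hab.2
  · intro a b hab
    exact c.valid hab

lemma colorable_of_contains {α β : Type*} {F : SimpleGraph α} {G : SimpleGraph β} {q : ℕ}
    (h : Contains F G) (hc : G.Colorable q) : F.Colorable q := by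
  obtain ⟨f, hf⟩ := h; obtain ⟨c⟩ := hc
  exact ⟨SimpleGraph.Coloring.mk (fun a => c (f a)) (fun {a b} hab => c.valid (hf a b hab))⟩

section Counting
open Finset
variable {V : Type*} [Fintype V] (G : SimpleGraph V)

/-- degree of `v` into `s` -/
noncomputable def de (s : Finset V) (v : V) : ℕ := #(s.filter (G.Adj v))

/-- ordered edge count within `s` -/
noncomputable def E2 (s : Finset V) : ℕ := ∑ v ∈ s, de G s v

lemma de_le_card_sub_one {s : Finset V} {v : V} (hv : v ∈ s) : de G s v ≤ #s - 1 := by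
  have h : s.filter (G.Adj v) ⊆ s.erase v := by
    intro w hw
    simp only [mem_filter] at hw
    exact mem_erase.2 ⟨fun he => G.loopless.irrefl v (he ▸ hw.2), hw.1⟩
  calc de G s v ≤ #(s.erase v) := card_le_card h
    _ = #s - 1 := card_erase_of_mem hv

lemma E2_le (s : Finset V) : E2 G s ≤ #s * (#s - 1) := by
  calc E2 G s ≤ ∑ _v ∈ s, (#s - 1) := Finset.sum_le_sum (fun v hv => de_le_card_sub_one G hv)
    _ = #s * (#s - 1) := by rw [Finset.sum_const, smul_eq_mul]

lemma E2_erase {s : Finset V} {v : V} (hv : v ∈ s) :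
    E2 G s = E2 G (s.erase v) + 2 * de G s v := by
  have key : ∀ w ∈ s.erase v, de G s w = de G (s.erase v) w + (if G.Adj w v then 1 else 0) := by
    intro w hw
    unfold de
    rw [filter_erase]
    by_cases h : G.Adj w v
    · rw [if_pos h, card_erase_of_mem (mem_filter.2 ⟨hv, h⟩)]
      have : 0 < #(s.filter (G.Adj w)) :=
        card_pos.2 ⟨v, mem_filter.2 ⟨hv, h⟩⟩
      omega
    · rw [if_neg h, erase_eq_of_notMem (by simp only [mem_filter, not_and]; exact fun _ => h)]
      omega
  have hde : de G (s.erase v) v = de G s v := by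
    unfold de
    rw [filter_erase, erase_eq_of_notMem (by simp [G.loopless.irrefl v])]
  have hsum : ∑ w ∈ s.erase v, (if G.Adj w v then 1 else 0) = de G s v := by
    rw [← Finset.sum_filter]
    unfold de
    rw [Finset.card_eq_sum_ones]
    apply Finset.sum_congr _ (fun _ _ => rfl)
    ext w
    simp only [mem_filter, mem_erase]
    constructor
    · rintro ⟨⟨hne, hws⟩, hadj⟩; exact ⟨hws, hadj.symm⟩
    · rintro ⟨hws, hadj⟩; exact ⟨⟨fun he => G.loopless.irrefl v (he ▸ hadj), hws⟩, hadj.symm⟩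
  calc E2 G s = de G s v + ∑ w ∈ s.erase v, de G s w := by
        rw [E2, ← Finset.add_sum_erase _ _ hv]
    _ = de G s v + ∑ w ∈ s.erase v, (de G (s.erase v) w + (if G.Adj w v then 1 else 0)) :=
        by rw [Finset.sum_congr rfl key]
    _ = de G s v + (E2 G (s.erase v) + de G s v) := by rw [Finset.sum_add_distrib, hsum]; rfl
    _ = E2 G (s.erase v) + 2 * de G s v := by ring

lemma E2_univ : E2 G Finset.univ = 2 * #G.edgeFinset := by
  classical
  rw [← SimpleGraph.sum_degrees_eq_twice_card_edges]
  apply Finset.sum_congr rfl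
  intro v _
  rw [← SimpleGraph.card_neighborFinset_eq_degree]
  unfold de
  congr 1
  rw [SimpleGraph.neighborFinset_eq_filter]

/-- Deletion lemma: pass to an induced subgraph of large minimum degree. -/
lemma del (c D : ℝ) : ∀ (n : ℕ) (s : Finset V), #s ≤ n →
    c * #s * (#s - 1) + D ≤ (E2 G s : ℝ) →
    ∃ u ⊆ s, c * #u * (#u - 1) + D ≤ (E2 G u : ℝ) ∧
      ∀ v ∈ u, c * (#u - 1) ≤ (de G u v : ℝ) := by
  intro n
  induction n with
  | zero =>
    intro s hs h
    refine ⟨s, Finset.Subset.refl s, h, ?_⟩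
    intro v hv
    exact absurd (Finset.card_pos.2 ⟨v, hv⟩) (by omega)
  | succ n ih =>
    intro s hs h
    by_cases hmin : ∀ v ∈ s, c * (#s - 1) ≤ (de G s v : ℝ)
    · exact ⟨s, Finset.Subset.refl s, h, hmin⟩
    · push_neg at hmin
      obtain ⟨v, hv, hlt⟩ := hmin
      have hcard : #(s.erase v) = #s - 1 := Finset.card_erase_of_mem hv
      have hpos : 1 ≤ #s := Finset.card_pos.2 ⟨v, hv⟩
      have hcardR : (#(s.erase v) : ℝ) = (#s : ℝ) - 1 := by
        rw [hcard, Nat.cast_sub hpos, Nat.cast_one]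
      have hE2 : (E2 G s : ℝ) = (E2 G (s.erase v) : ℝ) + 2 * (de G s v : ℝ) := by
        rw [E2_erase G hv]; push_cast; ring
      have hnext : c * #(s.erase v) * (#(s.erase v) - 1) + D ≤ (E2 G (s.erase v) : ℝ) := by
        rw [hcardR]
        nlinarith [hlt, h, hE2]
      obtain ⟨u, hu, h1, h2⟩ := ih (s.erase v) (by omega) hnext
      exact ⟨u, hu.trans (Finset.erase_subset v s), h1, h2⟩
end Counting

open Finset in
theorem erdosStoneMinDeg (q t : ℕ) (ε : ℝ) (hε : 0 < ε) :
    ∃ n₀ : ℕ, ∀ (V : Type) (_inst : Fintype V) (G : SimpleGraph V),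
      n₀ ≤ Fintype.card V →
      (q ≠ 0 → ∀ v : V, (1 - 1/(q:ℝ) + ε) * (Fintype.card V) ≤ (de G Finset.univ v : ℝ)) →
      Contains (KK (q+1) t) G := by
  induction q generalizing t with
  | zero =>
    refine ⟨t, fun V _ G hn _ => ?_⟩
    obtain ⟨f⟩ : Nonempty (Fin 1 × Fin t ↪ V) :=
      Function.Embedding.nonempty_of_card_le (by simpa using hn)
    exact ⟨f, fun a b hab => absurd (Subsingleton.elim (α := Fin 1) a.1 b.1) hab⟩
  | succ q ihq =>
    rcases Nat.eq_zero_or_pos t with rfl | ht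
    · refine ⟨0, fun V _ G _ _ => ?_⟩
      exact ⟨Function.Embedding.ofIsEmpty, fun a => isEmptyElim a⟩
    -- part size for the inner multipartite graph
    set s : ℕ := ⌈2 * (t:ℝ) / ε⌉₊ + t + 1 with hs_def
    obtain ⟨m₀, hm₀⟩ := ihq s
    set C : ℕ := (t-1) * (s.choose t)^(q+1) + 1 with hC_def
    refine ⟨max m₀ (⌈(2/ε) * C⌉₊ + 1), fun V _ G hn hdeg => ?_⟩
    set n : ℕ := Fintype.card V with hn_def
    have hdeg' : ∀ v : V, (1 - 1/((q:ℝ)+1) + ε) * n ≤ (de G Finset.univ v : ℝ) := by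
      intro v
      have := hdeg (Nat.succ_ne_zero q) v
      push_cast at this ⊢
      exact this
    -- inner multipartite graph
    have hinner : Contains (KK (q+1) s) G := by
      apply hm₀ V _ G (le_trans (le_max_left _ _) hn)
      intro hq0 v
      have hq1 : (1:ℝ) ≤ (q:ℝ) := by
        have : 1 ≤ q := Nat.one_le_iff_ne_zero.2 hq0
        exact_mod_cast this
      refine le_trans ?_ (hdeg' v)
      have h1 : 1/((q:ℝ)+1) ≤ 1/(q:ℝ) := by
        apply one_div_le_one_div_of_le (by linarith) (by linarith)
      have hn0 : (0:ℝ) ≤ n := Nat.cast_nonneg n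
      nlinarith
    obtain ⟨φ, hφ⟩ := hinner
    -- the parts
    set P : Fin (q+1) → Finset V := fun i => Finset.image (fun x => φ (i, x)) Finset.univ with hP_def
    have hφinj : ∀ i, Function.Injective (fun x : Fin s => φ (i, x)) := by
      intro i x y hxy
      have := φ.injective hxy
      simpa using this
    have hPcard : ∀ i, #(P i) = s := by
      intro i
      rw [hP_def]
      rw [Finset.card_image_of_injective _ (hφinj i)]
      simp
    have hPdisj : ∀ i j, i ≠ j → ∀ u, u ∈ P i → u ∈ P j → False := by
      intro i j hij u hui huj
      simp only [hP_def, Finset.mem_image, Finset.mem_univ, true_and] at hui huj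
      obtain ⟨a, ha⟩ := hui; obtain ⟨b, hb⟩ := huj
      have := φ.injective (ha.trans hb.symm)
      exact hij (congrArg Prod.fst this)
    set K : Finset V := (Finset.univ : Finset (Fin (q+1) × Fin s)).image φ with hK_def
    have hPK : ∀ i, P i ⊆ K := by
      intro i u hu
      simp only [hP_def, Finset.mem_image, Finset.mem_univ, true_and] at hu
      obtain ⟨a, ha⟩ := hu
      exact Finset.mem_image.2 ⟨(i,a), Finset.mem_univ _, ha⟩
    have hKcard : #K = (q+1) * s := by
      rw [hK_def, Finset.card_image_of_injective _ φ.injective]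
      simp [Fintype.card_prod]
    set N : V → Finset V := fun v => Finset.univ.filter (G.Adj v) with hN_def
    set good : V → Prop := fun v => ∀ i, t ≤ #(P i ∩ N v) with hgood_def
    set Gd : Finset V := Finset.univ.filter good with hGd_def
    set B : Finset V := Finset.univ.filter (fun v => ¬ good v) with hB_def
    -- counting bad vertices
    have hst : t + 1 ≤ s := by omega
    have hbad1 : ∀ v ∈ B, (s - t + 1 : ℕ) ≤ #(K \ N v) := by
      intro v hv
      simp only [hB_def, Finset.mem_filter, hgood_def] at hv
      push_neg at hv
      obtain ⟨i, hi⟩ := hv.2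
      have h1 : #(P i ∩ N v) + #(P i \ N v) = s := by
        rw [Finset.card_inter_add_card_sdiff, hPcard]
      have h2 : s - t + 1 ≤ #(P i \ N v) := by omega
      exact le_trans h2 (Finset.card_le_card
        (Finset.sdiff_subset_sdiff (hPK i) (Finset.Subset.refl _)))
    have hbad2 : ∑ v : V, #(K \ N v) = ∑ u ∈ K, (n - de G Finset.univ u) := by
      calc ∑ v : V, #(K \ N v) = ∑ v : V, ∑ u ∈ K, (if G.Adj v u then 0 else 1) := by
            refine Finset.sum_congr rfl fun v _ => ?_
            have h1 : K \ N v = K.filter (fun u => ¬ G.Adj v u) := by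
              ext u; simp [hN_def]
            rw [h1, Finset.card_filter]
            exact Finset.sum_congr rfl fun u _ => by by_cases h : G.Adj v u <;> simp [h]
        _ = ∑ u ∈ K, ∑ v : V, (if G.Adj v u then 0 else 1) := Finset.sum_comm
        _ = ∑ u ∈ K, (n - de G Finset.univ u) := by
            refine Finset.sum_congr rfl fun u _ => ?_
            have h2 : ∑ v : V, (if G.Adj v u then 0 else 1)
                = #(Finset.univ.filter (fun v => ¬ G.Adj v u)) := by
              rw [Finset.card_filter]
              exact Finset.sum_congr rfl fun v _ => by by_cases h : G.Adj v u <;> simp [h]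
            rw [h2, Finset.filter_not, Finset.card_sdiff_of_subset (Finset.filter_subset _ _),
              Finset.card_univ]
            have h3 : Finset.univ.filter (fun v => G.Adj v u) = Finset.univ.filter (G.Adj u) := by
              ext v
              simp only [Finset.mem_filter, Finset.mem_univ, true_and]
              exact G.adj_comm v u
            rw [h3]
            rfl
    have hna : (s - t + 1) * #B ≤ ∑ u ∈ K, (n - de G Finset.univ u) := by
      calc (s - t + 1) * #B = ∑ _v ∈ B, (s - t + 1) := by
            rw [Finset.sum_const, smul_eq_mul, mul_comm]
        _ ≤ ∑ v ∈ B, #(K \ N v) := Finset.sum_le_sum hbad1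
        _ ≤ ∑ v : V, #(K \ N v) := Finset.sum_le_sum_of_subset (Finset.subset_univ B)
        _ = _ := hbad2
    have htle : t ≤ s := by omega
    have hεs : 2 * (t:ℝ) ≤ ε * s := by
      have h1 : 2 * (t:ℝ) / ε ≤ (⌈2 * (t:ℝ) / ε⌉₊ : ℝ) := Nat.le_ceil _
      have h2 : ((⌈2 * (t:ℝ) / ε⌉₊ : ℕ) : ℝ) ≤ (s : ℝ) := by
        have : (⌈2 * (t:ℝ) / ε⌉₊ : ℕ) ≤ s := by omega
        exact_mod_cast this
      have h3 : 2 * (t:ℝ) / ε ≤ s := le_trans h1 h2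
      rw [div_le_iff₀ hε] at h3
      linarith
    have hBbound : (#B : ℝ) ≤ (1 - ε/2) * n := by
      have hq0 : (0:ℝ) ≤ (q:ℝ) := Nat.cast_nonneg q
      have ht1 : (1:ℝ) ≤ (t:ℝ) := by exact_mod_cast ht
      have hs1 : (t:ℝ) + 1 ≤ (s:ℝ) := by exact_mod_cast hst
      have hnn : (0:ℝ) ≤ (n:ℝ) := Nat.cast_nonneg n
      have hkey : ((q:ℝ)+1) * s * (1/((q:ℝ)+1) - ε) ≤ ((s:ℝ) - t + 1) * (1 - ε/2) := by
        have hL : ((q:ℝ)+1) * s * (1/((q:ℝ)+1) - ε) = s - ((q:ℝ)+1) * s * ε := by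
          field_simp
        rw [hL]
        nlinarith [mul_nonneg hq0 (mul_nonneg (Nat.cast_nonneg (α := ℝ) s) (le_of_lt hε))]
      have hb : ∀ u ∈ K, ((n - de G Finset.univ u : ℕ) : ℝ) ≤ (1/((q:ℝ)+1) - ε) * n := by
        intro u _
        have h1 : de G Finset.univ u ≤ n := by
          unfold de
          calc #(Finset.univ.filter (G.Adj u)) ≤ #(Finset.univ : Finset V) :=
                Finset.card_filter_le _ _
            _ = n := Finset.card_univ
        rw [Nat.cast_sub h1]
        have := hdeg' u
        linarith
      have hc : (((s - t + 1) * #B : ℕ) : ℝ) ≤ (#K : ℝ) * ((1/((q:ℝ)+1) - ε) * n) := by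
        calc (((s - t + 1) * #B : ℕ) : ℝ) ≤ ((∑ u ∈ K, (n - de G Finset.univ u) : ℕ) : ℝ) :=
              Nat.cast_le.2 hna
          _ = ∑ u ∈ K, ((n - de G Finset.univ u : ℕ) : ℝ) := Nat.cast_sum _ _
          _ ≤ ∑ _u ∈ K, (1/((q:ℝ)+1) - ε) * n := Finset.sum_le_sum hb
          _ = (#K : ℝ) * ((1/((q:ℝ)+1) - ε) * n) := by rw [Finset.sum_const, nsmul_eq_mul]
      have hcast : (((s - t + 1) * #B : ℕ) : ℝ) = ((s:ℝ) - t + 1) * #B := by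
        rw [Nat.cast_mul, Nat.cast_add, Nat.cast_sub htle, Nat.cast_one]
      have hKR : (#K : ℝ) = ((q:ℝ)+1) * s := by rw [hKcard]; push_cast; ring
      rw [hcast, hKR] at hc
      have hd : ((s:ℝ) - t + 1) * #B ≤ ((s:ℝ) - t + 1) * ((1 - ε/2) * n) := by
        calc ((s:ℝ) - t + 1) * #B ≤ ((q:ℝ)+1) * s * ((1/((q:ℝ)+1) - ε) * n) := hc
          _ = (((q:ℝ)+1) * s * (1/((q:ℝ)+1) - ε)) * n := by ring
          _ ≤ (((s:ℝ) - t + 1) * (1 - ε/2)) * n := mul_le_mul_of_nonneg_right hkey hnn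
          _ = ((s:ℝ) - t + 1) * ((1 - ε/2) * n) := by ring
      have hpos : (0:ℝ) < (s:ℝ) - t + 1 := by linarith
      exact (mul_le_mul_iff_right₀ hpos).1 hd
    have hGdB : #Gd + #B = n := by
      rw [hGd_def, hB_def]
      rw [Finset.card_filter_add_card_filter_not]
      simp [hn_def]
    have hGdC : (C : ℝ) ≤ (#Gd : ℝ) := by
      have h2 : (⌈(2/ε) * C⌉₊ : ℕ) ≤ n := le_trans (Nat.le_succ _) (le_trans (le_max_right _ _) hn)
      have h3 : (2/ε) * C ≤ (n : ℝ) := le_trans (Nat.le_ceil _) (Nat.cast_le.2 h2)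
      have h4 : (#Gd : ℝ) = n - #B := by
        have := hGdB; push_cast [← this]; ring
      have h5 : (ε/2) * n ≤ (#Gd : ℝ) := by
        rw [h4]; nlinarith [(Nat.cast_nonneg n : (0:ℝ) ≤ (n:ℝ))]
      have h8 : (C:ℝ) = (ε/2) * ((2/ε)*C) := by field_simp
      rw [h8]
      calc (ε/2) * ((2/ε)*C) ≤ (ε/2) * n := by
            apply mul_le_mul_of_nonneg_left h3 (by positivity)
        _ ≤ _ := h5
    -- choose witness t-subsets for good vertices
    have hTex : ∀ v : V, ∃ T : Fin (q+1) → Finset V, v ∈ Gd →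
        ∀ i, T i ⊆ P i ∩ N v ∧ #(T i) = t := by
      intro v
      by_cases hv : v ∈ Gd
      · have hgv : good v := (Finset.mem_filter.1 hv).2
        have h := fun i => Finset.exists_subset_card_eq (hgv i)
        choose T h1 h2 using h
        exact ⟨T, fun _ i => ⟨h1 i, h2 i⟩⟩
      · exact ⟨fun _ => ∅, fun h => absurd h hv⟩
    choose T hT using hTex
    -- pigeonhole over tuples of t-subsets of the parts
    set D : Finset ((i : Fin (q+1)) → i ∈ (Finset.univ : Finset (Fin (q+1))) → Finset V) :=
      (Finset.univ : Finset (Fin (q+1))).pi (fun i => Finset.powersetCard t (P i)) with hD_def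
    have hDcard : #D = (s.choose t)^(q+1) := by
      rw [hD_def, Finset.card_pi]
      rw [Finset.prod_congr rfl (fun i _ => by rw [Finset.card_powersetCard, hPcard])]
      rw [Finset.prod_const, Finset.card_univ, Fintype.card_fin]
    have hmaps : ∀ v ∈ Gd, (fun i (_ : i ∈ (Finset.univ : Finset (Fin (q+1)))) => T v i) ∈ D := by
      intro v hv
      rw [hD_def, Finset.mem_pi]
      intro i _
      rw [Finset.mem_powersetCard]
      exact ⟨((hT v hv i).1).trans Finset.inter_subset_left, (hT v hv i).2⟩
    have hpig : ∃ y ∈ D, (t-1) <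
        #(Gd.filter (fun v => (fun i (_ : i ∈ (Finset.univ : Finset (Fin (q+1)))) => T v i) = y)) := by
      apply Finset.exists_lt_card_fiber_of_mul_lt_card_of_maps_to hmaps
      rw [hDcard]
      have h1 : C ≤ #Gd := by exact_mod_cast hGdC
      have h2 : (s.choose t)^(q+1) * (t-1) < C := by
        rw [hC_def]
        have := Nat.mul_comm ((s.choose t)^(q+1)) (t-1)
        omega
      omega
    obtain ⟨y, hyD, hyW⟩ := hpig
    set W : Finset V :=
      Gd.filter (fun v => (fun i (_ : i ∈ (Finset.univ : Finset (Fin (q+1)))) => T v i) = y)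
      with hW_def
    have hWt : t ≤ #W := by omega
    obtain ⟨W', hW'sub, hW'card⟩ := Finset.exists_subset_card_eq hWt
    set Y : Fin (q+1) → Finset V := fun i => y i (Finset.mem_univ i) with hY_def
    have hYsub : ∀ v ∈ W, ∀ i, Y i ⊆ P i ∩ N v ∧ #(Y i) = t := by
      intro v hv i
      rw [hW_def, Finset.mem_filter] at hv
      have h1 : T v i = Y i := by
        rw [hY_def]
        exact congrFun (congrFun hv.2 i) (Finset.mem_univ i)
      rw [← h1]
      exact hT v hv.1 i
    obtain ⟨v₀, hv₀⟩ := Finset.card_pos.1 (lt_of_lt_of_le ht hWt)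
    have hYcard : ∀ i, #(Y i) = t := fun i => (hYsub v₀ hv₀ i).2
    have hYP : ∀ i, Y i ⊆ P i := fun i => ((hYsub v₀ hv₀ i).1).trans Finset.inter_subset_left
    have hadjYW : ∀ v ∈ W, ∀ i, ∀ u ∈ Y i, G.Adj v u := by
      intro v hv i u hu
      have h1 := ((hYsub v hv i).1) hu
      have h2 := Finset.mem_inter.1 h1
      have := h2.2
      rw [hN_def] at this
      exact (Finset.mem_filter.1 this).2
    -- the enumerations of the parts and of the new class
    have eY : ∀ i, Fin t ≃ {x // x ∈ Y i} := fun i =>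
      (Fintype.equivFinOfCardEq (by rw [Fintype.card_coe, hYcard])).symm
    have eW : Fin t ≃ {x // x ∈ W'} :=
      (Fintype.equivFinOfCardEq (by rw [Fintype.card_coe, hW'card])).symm
    set ψ : Fin (q+2) × Fin t → V := fun a =>
      if h : (a.1 : ℕ) < q+1 then ((eY ⟨a.1, h⟩ a.2 : {x // x ∈ Y ⟨a.1, h⟩}) : V)
      else ((eW a.2 : {x // x ∈ W'}) : V) with hψ_def
    have hψY : ∀ (i : Fin (q+2)) (h : (i:ℕ) < q+1) (x : Fin t),
        ψ (i, x) = ((eY ⟨i.1, h⟩ x : {x // x ∈ Y ⟨i.1, h⟩}) : V) := by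
      intro i h x
      rw [hψ_def]
      exact dif_pos h
    have hψW : ∀ (i : Fin (q+2)) (h : ¬ (i:ℕ) < q+1) (x : Fin t),
        ψ (i, x) = ((eW x : {x // x ∈ W'}) : V) := by
      intro i h x
      rw [hψ_def]
      exact dif_neg h
    have hmemY : ∀ (i : Fin (q+1)) (x : Fin t), ((eY i x : {x // x ∈ Y i}) : V) ∈ Y i :=
      fun i x => (eY i x).2
    have hmemW : ∀ (x : Fin t), ((eW x : {x // x ∈ W'}) : V) ∈ W :=
      fun x => hW'sub (eW x).2
    -- mixed vertices are distinct
    have hdistinct : ∀ (i : Fin (q+1)) (x z : Fin t),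
        ((eY i x : {x // x ∈ Y i}) : V) ≠ ((eW z : {x // x ∈ W'}) : V) := by
      intro i x z h
      have h1 : G.Adj (((eW z : {x // x ∈ W'}) : V)) (((eY i x : {x // x ∈ Y i}) : V)) :=
        hadjYW _ (hmemW z) i _ (hmemY i x)
      rw [← h] at h1
      rw [h] at h1
      exact G.loopless.irrefl _ h1
    have hinj : Function.Injective ψ := by
      rintro ⟨i, x⟩ ⟨j, z⟩ h
      by_cases hi : (i:ℕ) < q+1 <;> by_cases hj : (j:ℕ) < q+1
      · rw [hψY i hi x, hψY j hj z] at h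
        have hij : (⟨i.1, hi⟩ : Fin (q+1)) = ⟨j.1, hj⟩ := by
          by_contra hne
          exact hPdisj _ _ hne _ (hYP _ (hmemY ⟨i.1, hi⟩ x))
            (hYP _ (h ▸ hmemY ⟨j.1, hj⟩ z))
        have hij2 : i = j := Fin.ext (by simpa using congrArg Fin.val hij)
        subst hij2
        have hxz : x = z := (eY ⟨i.1, hi⟩).injective (Subtype.coe_injective h)
        rw [hxz]
      · rw [hψY i hi x, hψW j hj z] at h
        exact absurd h (hdistinct _ x z)
      · rw [hψW i hi x, hψY j hj z] at h
        exact absurd h.symm (hdistinct _ z x)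
      · rw [hψW i hi x, hψW j hj z] at h
        have hij : i = j := Fin.ext (by omega)
        subst hij
        have hxz : x = z := (eW).injective (Subtype.coe_injective h)
        rw [hxz]
    have hadj : ∀ a b : Fin (q+2) × Fin t, (KK (q+2) t).Adj a b → G.Adj (ψ a) (ψ b) := by
      rintro ⟨i, x⟩ ⟨j, z⟩ hab
      have hij : i ≠ j := hab
      by_cases hi : (i:ℕ) < q+1 <;> by_cases hj : (j:ℕ) < q+1
      · rw [hψY i hi x, hψY j hj z]
        obtain ⟨a, _, ha⟩ := Finset.mem_image.1 (hYP _ (hmemY ⟨i.1, hi⟩ x))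
        obtain ⟨b, _, hb⟩ := Finset.mem_image.1 (hYP _ (hmemY ⟨j.1, hj⟩ z))
        rw [← ha, ← hb]
        apply hφ
        show (⟨i.1, hi⟩ : Fin (q+1)) ≠ ⟨j.1, hj⟩
        intro hc
        exact hij (Fin.ext (by simpa using congrArg Fin.val hc))
      · rw [hψY i hi x, hψW j hj z]
        exact (hadjYW _ (hmemW z) _ _ (hmemY ⟨i.1, hi⟩ x)).symm
      · rw [hψW i hi x, hψY j hj z]
        exact hadjYW _ (hmemW x) _ _ (hmemY ⟨j.1, hj⟩ z)
      · exact absurd (Fin.ext (by omega) : i = j) hij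
    exact ⟨⟨ψ, hinj⟩, hadj⟩

lemma de_comap {V : Type} [Fintype V] (G : SimpleGraph V) (u : Finset V) (v : {x // x ∈ u}) :
    de (G.comap (Subtype.val)) Finset.univ v = de G u ↑v := by
  unfold de
  apply Finset.card_bij (fun (w : {x // x ∈ u}) _ => (w : V))
  · intro a ha
    simp only [Finset.mem_filter, Finset.mem_univ, true_and, SimpleGraph.comap_adj] at ha ⊢
    exact ⟨a.2, ha⟩
  · intro a _ b _ hab
    exact Subtype.coe_injective hab
  · intro b hb
    simp only [Finset.mem_filter] at hb
    exact ⟨⟨b, hb.1⟩, by simp [hb.2], rfl⟩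

lemma contains_comap {α V : Type*} {F : SimpleGraph α} {G : SimpleGraph V} {u : Finset V}
    (h : Contains F (G.comap (Subtype.val : {x // x ∈ u} → V))) : Contains F G := by
  obtain ⟨f, hf⟩ := h
  exact ⟨f.trans ⟨Subtype.val, Subtype.coe_injective⟩, fun a b hab => hf a b hab⟩

set_option maxHeartbeats 1000000 in
open Finset in
theorem erdosStoneDensity (q t : ℕ) (hq : q ≠ 0) (ε : ℝ) (hε : 0 < ε) :
    ∃ n₀ : ℕ, ∀ (V : Type) (_inst : Fintype V) (G : SimpleGraph V),
      n₀ ≤ Fintype.card V →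
      (1 - 1/(q:ℝ) + ε) * (Fintype.card V) * ((Fintype.card V : ℝ) - 1) ≤ (E2 G Finset.univ : ℝ) →
      Contains (KK (q+1) t) G := by
  obtain ⟨m₀, hm₀⟩ := erdosStoneMinDeg q t (ε/4) (by positivity)
  have hq1 : (1:ℝ) ≤ (q:ℝ) := by exact_mod_cast Nat.one_le_iff_ne_zero.2 hq
  set c : ℝ := 1 - 1/(q:ℝ) + ε/2 with hc_def
  have hc0 : 0 ≤ c := by
    have : 1/(q:ℝ) ≤ 1 := by
      rw [div_le_one (by linarith)]; linarith
    rw [hc_def]; linarith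
  set M : ℕ := max m₀ (⌈(4/ε) * c⌉₊ + 1) with hM_def
  refine ⟨⌈(2/ε) * (M:ℝ)^2⌉₊ + 1, fun V _ G hn hE => ?_⟩
  set n : ℕ := Fintype.card V with hn_def
  have hn1 : 1 ≤ n := by omega
  have hnR : (1:ℝ) ≤ (n:ℝ) := by exact_mod_cast hn1
  have hsplit : c * (#(Finset.univ : Finset V) : ℝ) * ((#(Finset.univ : Finset V) : ℝ) - 1)
      + (ε/2) * n * ((n:ℝ)-1) ≤ (E2 G Finset.univ : ℝ) := by
    rw [Finset.card_univ, ← hn_def]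
    calc c * n * ((n:ℝ)-1) + (ε/2) * n * ((n:ℝ)-1)
        = (1 - 1/(q:ℝ) + ε) * n * ((n:ℝ)-1) := by rw [hc_def]; ring
      _ ≤ _ := hE
  obtain ⟨u, _, hu1, hu2⟩ := del G c ((ε/2) * n * ((n:ℝ)-1)) n Finset.univ
    (le_of_eq (by rw [Finset.card_univ])) hsplit
  set m : ℕ := #u with hm_def
  have hmR0 : (0:ℝ) ≤ (m:ℝ) := Nat.cast_nonneg m
  have hE2le : (E2 G u : ℝ) ≤ (m:ℝ) * ((m:ℝ) - 1) := by
    have h1 := E2_le G u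
    have h2 : ((E2 G u : ℕ) : ℝ) ≤ ((m * (m-1) : ℕ) : ℝ) := Nat.cast_le.2 h1
    refine le_trans h2 ?_
    rcases Nat.eq_zero_or_pos m with hm0 | hm0
    · simp [hm0]
    · rw [Nat.cast_mul, Nat.cast_sub hm0, Nat.cast_one]
  have hmm0 : 0 ≤ (m:ℝ) * ((m:ℝ)-1) := by
    rcases Nat.eq_zero_or_pos m with h | h
    · simp [h]
    · have : (1:ℝ) ≤ (m:ℝ) := by exact_mod_cast h
      nlinarith
  have hDm : (ε/2) * n * ((n:ℝ)-1) ≤ (m:ℝ) * ((m:ℝ)-1) := by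
    have hcA : 0 ≤ c * (m:ℝ) * ((m:ℝ)-1) := by
      rw [mul_assoc]; exact mul_nonneg hc0 hmm0
    clear_value c m n
    linarith [hu1, hE2le, hcA]
  have hM2 : ((M:ℝ))^2 ≤ (m:ℝ) * ((m:ℝ)-1) := by
    have h1 : ((⌈(2/ε) * (M:ℝ)^2⌉₊ : ℕ) : ℝ) ≤ (n:ℝ) - 1 := by
      have : (⌈(2/ε) * (M:ℝ)^2⌉₊ + 1 : ℕ) ≤ n := hn
      have h2 : ((⌈(2/ε) * (M:ℝ)^2⌉₊ + 1 : ℕ) : ℝ) ≤ (n:ℝ) := by exact_mod_cast this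
      push_cast at h2
      linarith
    have h2 : (2/ε) * (M:ℝ)^2 ≤ (n:ℝ) - 1 := le_trans (Nat.le_ceil _) h1
    have h3 : (ε/2) * ((2/ε) * (M:ℝ)^2) = (M:ℝ)^2 := by field_simp
    calc ((M:ℝ))^2 = (ε/2) * ((2/ε) * (M:ℝ)^2) := h3.symm
      _ ≤ (ε/2) * ((n:ℝ) - 1) := by
          apply mul_le_mul_of_nonneg_left h2 (by positivity)
      _ ≤ (ε/2) * (n * ((n:ℝ)-1)) := by
          apply mul_le_mul_of_nonneg_left _ (by positivity)
          nlinarith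
      _ = (ε/2) * n * ((n:ℝ)-1) := by ring
      _ ≤ _ := hDm
  have hMm : (M:ℝ) ≤ (m:ℝ) := by
    by_contra hcon
    push_neg at hcon
    have hM0 : (0:ℝ) ≤ (M:ℝ) := Nat.cast_nonneg M
    nlinarith
  have hMmN : M ≤ m := by exact_mod_cast hMm
  -- pass to the induced subgraph
  have hcard : Fintype.card {x // x ∈ u} = m := Fintype.card_coe u
  apply contains_comap (u := u)
  apply hm₀ _ _ _ (by rw [hcard]; exact le_trans (le_max_left _ _) hMmN)
  intro _ v
  rw [hcard, de_comap]
  have h2 := hu2 ↑v v.2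
  have hMc : (4/ε) * c + 1 ≤ (M:ℝ) := by
    have h3 : (⌈(4/ε) * c⌉₊ + 1 : ℕ) ≤ M := le_max_right _ _
    have h4 : ((⌈(4/ε) * c⌉₊ + 1 : ℕ) : ℝ) ≤ (M:ℝ) := by exact_mod_cast h3
    push_cast at h4
    have := Nat.le_ceil ((4/ε) * c)
    linarith
  have hgoal : (1 - 1/(q:ℝ) + ε/4) * (m:ℝ) ≤ c * ((m:ℝ) - 1) := by
    have h5 : (4/ε) * c + 1 ≤ (m:ℝ) := le_trans hMc hMm
    have h6 : (ε/4) * (m:ℝ) ≥ (ε/4) * ((4/ε) * c + 1) :=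
      mul_le_mul_of_nonneg_left h5 (by positivity)
    have h7 : (ε/4) * ((4/ε) * c) = c := by field_simp
    rw [hc_def]
    nlinarith [h6, h7]
  exact le_trans hgoal h2

open Finset in
lemma ecard_eq_card_edgeFinset {V : Type*} [Fintype V] (H : SimpleGraph V) :
    ecard H = #H.edgeFinset := by
  rw [ecard, Set.ncard_eq_toFinset_card']
  congr 1

open Finset in
lemma two_mul_ecard {V : Type*} [Fintype V] (H : SimpleGraph V) :
    2 * ecard H = E2 H Finset.univ := by
  rw [ecard_eq_card_edgeFinset, E2_univ]

lemma ecard_le_choose {n : ℕ} (H : SimpleGraph (Fin n)) : ecard H ≤ n.choose 2 := by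
  rw [ecard_eq_card_edgeFinset]
  have := SimpleGraph.card_edgeFinset_le_card_choose_two (G := H)
  simpa using this

lemma exNum_bddAbove {α : Type*} (F : SimpleGraph α) (n : ℕ) :
    BddAbove {m | ∃ H : SimpleGraph (Fin n), ¬ Contains F H ∧ ecard H = m} := by
  refine ⟨n.choose 2, fun m hm => ?_⟩
  obtain ⟨H, _, rfl⟩ := hm
  exact ecard_le_choose H

lemma exNum_ge {α : Type*} {F : SimpleGraph α} {n : ℕ} (H : SimpleGraph (Fin n))
    (hH : ¬ Contains F H) : ecard H ≤ exNum n F :=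
  le_csSup (exNum_bddAbove F n) ⟨H, hH, rfl⟩

lemma bot_free {α β : Type*} {F : SimpleGraph α} (hF : F.edgeSet.Nonempty) :
    ¬ Contains F (⊥ : SimpleGraph β) := by
  rintro ⟨f, hf⟩
  obtain ⟨e, he⟩ := hF
  induction e with
  | h a b => exact hf a b ((SimpleGraph.mem_edgeSet F).1 he)

lemma exNum_mem {α : Type*} {F : SimpleGraph α} (hF : F.edgeSet.Nonempty) (n : ℕ) :
    ∃ H : SimpleGraph (Fin n), ¬ Contains F H ∧ ecard H = exNum n F := by
  have h1 : {m | ∃ H : SimpleGraph (Fin n), ¬ Contains F H ∧ ecard H = m}.Nonempty := by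
    refine ⟨ecard (⊥ : SimpleGraph (Fin n)), ⊥, bot_free hF, rfl⟩
  exact Nat.sSup_mem h1 (exNum_bddAbove F n)

/-- complete multipartite construction used for the lower bound -/
def myTuran (n q : ℕ) : SimpleGraph (Fin n) where
  Adj v w := (v : ℕ) % q ≠ (w : ℕ) % q
  symm := ⟨fun v w h => h.symm⟩
  loopless := ⟨fun v h => h rfl⟩

lemma myTuran_colorable (n q : ℕ) (hq : q ≠ 0) : (myTuran n q).Colorable q :=
  ⟨SimpleGraph.Coloring.mk (fun v => ⟨(v:ℕ) % q, Nat.mod_lt _ (Nat.pos_of_ne_zero hq)⟩)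
    (fun {a b} hab hc => hab (by
      have := congrArg Fin.val hc
      simpa using this))⟩

open Finset in
lemma myTuran_de (n q : ℕ) (hq : q ≠ 0) (v : Fin n) :
    n - (n/q + 1) ≤ de (myTuran n q) Finset.univ v := by
  unfold de
  have h1 : #(univ.filter (fun w : Fin n => ¬ (myTuran n q).Adj v w)) ≤ n/q + 1 := by
    have hsub : univ.filter (fun w : Fin n => ¬ (myTuran n q).Adj v w) ⊆
        univ.filter (fun w : Fin n => (w:ℕ) % q = (v:ℕ) % q) := by
      intro w hw
      simp only [mem_filter, mem_univ, true_and, myTuran, Set.mem_setOf_eq] at hw ⊢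
      simpa [eq_comm] using hw
    refine le_trans (card_le_card hsub) ?_
    have h2 : #(Finset.range (n/q + 1)) = n/q + 1 := Finset.card_range _
    rw [← h2]
    apply Finset.card_le_card_of_injOn (fun w : Fin n => (w:ℕ)/q)
    · intro w hw
      simp only [Finset.mem_coe, Finset.mem_range]
      have h3 : (w:ℕ) < n := w.isLt
      have h4 : (w:ℕ)/q ≤ n/q := Nat.div_le_div_right h3.le
      omega
    · intro w1 hw1 w2 hw2 hdiv
      simp only [coe_filter, Set.mem_setOf_eq, mem_univ, true_and] at hw1 hw2
      apply Fin.ext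
      have hdiv' : (w1:ℕ)/q = (w2:ℕ)/q := hdiv
      have hm : (w1:ℕ) % q = (w2:ℕ) % q := hw1.trans hw2.symm
      calc (w1:ℕ) = q * ((w1:ℕ)/q) + (w1:ℕ) % q := (Nat.div_add_mod _ _).symm
        _ = q * ((w2:ℕ)/q) + (w2:ℕ) % q := by rw [hdiv', hm]
        _ = (w2:ℕ) := Nat.div_add_mod _ _
  have h2 : #(univ.filter ((myTuran n q).Adj v)) +
      #(univ.filter (fun w : Fin n => ¬ (myTuran n q).Adj v w)) = n := by
    rw [Finset.card_filter_add_card_filter_not, Finset.card_univ, Fintype.card_fin]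
  omega

open Finset in
lemma myTuran_E2 (n q : ℕ) (hq : q ≠ 0) :
    n * (n - (n/q + 1)) ≤ E2 (myTuran n q) Finset.univ := by
  calc n * (n - (n/q + 1)) = ∑ _v : Fin n, (n - (n/q + 1)) := by
        rw [Finset.sum_const, Finset.card_univ, Fintype.card_fin, smul_eq_mul]
    _ ≤ ∑ v : Fin n, de (myTuran n q) Finset.univ v :=
        Finset.sum_le_sum (fun v _ => myTuran_de n q hq v)
    _ = E2 (myTuran n q) Finset.univ := rfl

set_option maxHeartbeats 1600000 in
/-- Erdős–Stone theorem. -/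
theorem stmt2 {α : Type*} [Fintype α] (F : SimpleGraph α) (hF : F.edgeSet.Nonempty) :
    Tendsto (fun n => (exNum n F : ℝ) / (n.choose 2 : ℝ)) atTop
      (nhds (1 - 1 / ((F.chromaticNumber.toNat : ℝ) - 1))) := by
  classical
  obtain ⟨a, b, hab⟩ : ∃ a b, F.Adj a b := by
    obtain ⟨e, he⟩ := hF
    induction e with
    | h a b => exact ⟨a, b, (SimpleGraph.mem_edgeSet F).1 he⟩
  set r : ℕ := F.chromaticNumber.toNat with hr_def
  have hcol : F.Colorable (Fintype.card α) := F.colorable_of_fintype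
  have hrcol : F.Colorable r := SimpleGraph.colorable_chromaticNumber hcol
  have hr2 : 2 ≤ r := by
    by_contra h
    push_neg at h
    have h1 : F.Colorable 1 := hrcol.mono (by omega)
    obtain ⟨c⟩ := h1
    exact (c.valid hab) (Subsingleton.elim _ _)
  set q : ℕ := r - 1 with hq_def
  have hq0 : q ≠ 0 := by omega
  have hqR : (q:ℝ) = (r:ℝ) - 1 := by
    rw [hq_def, Nat.cast_sub (by omega), Nat.cast_one]
  have hq1R : (1:ℝ) ≤ (q:ℝ) := by
    have := Nat.one_le_iff_ne_zero.2 hq0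
    exact_mod_cast this
  have hnotcol : ¬ F.Colorable q := by
    intro hc
    have h1 : F.chromaticNumber ≤ q := hc.chromaticNumber_le
    have hne : F.chromaticNumber ≠ ⊤ :=
      SimpleGraph.chromaticNumber_ne_top_iff_exists.2 ⟨_, hcol⟩
    have hχ : F.chromaticNumber = (r:ℕ∞) := (ENat.coe_toNat hne).symm
    rw [hχ] at h1
    have h2 : r ≤ q := by exact_mod_cast h1
    omega
  have hLrw : (1 : ℝ) - 1/((r:ℝ)-1) = 1 - 1/(q:ℝ) := by rw [hqR]
  rw [hLrw, Metric.tendsto_atTop]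
  intro ε hε
  obtain ⟨n₁, hn₁⟩ := erdosStoneDensity q (Fintype.card α) hq0 (ε/2) (by positivity)
  set N₂ : ℕ := ⌈2/ε⌉₊ + 2 with hN₂_def
  refine ⟨max n₁ N₂, fun n hn => ?_⟩
  have hnn1 : n₁ ≤ n := le_trans (le_max_left _ _) hn
  have hnN₂ : N₂ ≤ n := le_trans (le_max_right _ _) hn
  have hn2 : 2 ≤ n := by omega
  have hn2R : (2:ℝ) ≤ (n:ℝ) := by exact_mod_cast hn2
  have hchoose : ((n.choose 2 : ℕ):ℝ) = (n:ℝ)*((n:ℝ)-1)/2 := Nat.cast_choose_two (K := ℝ) n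
  have hchoosePos : (0:ℝ) < ((n.choose 2 : ℕ):ℝ) := by rw [hchoose]; nlinarith
  -- upper bound
  obtain ⟨H₀, hH₀free, hH₀card⟩ := exNum_mem hF n
  have hKKfree : ¬ Contains (KK (q+1) (Fintype.card α)) H₀ := by
    intro hc
    apply hH₀free
    refine contains_trans ?_ hc
    have hqr : q + 1 = r := by omega
    rw [hqr]
    exact contains_KK_of_colorable hrcol _ le_rfl
  have hupper : (E2 H₀ Finset.univ : ℝ) < (1 - 1/(q:ℝ) + ε/2) * (n:ℝ) * ((n:ℝ)-1) := by
    by_contra hcon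
    push_neg at hcon
    apply hKKfree
    apply hn₁ (Fin n) _ H₀
    · rw [Fintype.card_fin]; exact hnn1
    · rw [Fintype.card_fin]; exact hcon
  have h2ex : 2 * ((exNum n F : ℕ) : ℝ) = (E2 H₀ Finset.univ : ℝ) := by
    rw [← hH₀card]
    exact_mod_cast congrArg (fun k : ℕ => (k:ℝ)) (two_mul_ecard H₀)
  have hUB : ((exNum n F : ℕ) : ℝ) ≤ (1 - 1/(q:ℝ) + ε/2) * ((n.choose 2 : ℕ):ℝ) := by
    rw [hchoose]
    linarith [hupper, h2ex]
  -- lower bound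
  have hTfree : ¬ Contains F (myTuran n q) :=
    fun hc => hnotcol (colorable_of_contains hc (myTuran_colorable n q hq0))
  have hTle : ecard (myTuran n q) ≤ exNum n F := exNum_ge _ hTfree
  have hTleR : ((ecard (myTuran n q) : ℕ):ℝ) ≤ ((exNum n F : ℕ):ℝ) := Nat.cast_le.2 hTle
  have hE2T : (n:ℝ) * ((n:ℝ) - ((n/q : ℕ):ℝ) - 1) ≤ (E2 (myTuran n q) Finset.univ : ℝ) := by
    have h1 := myTuran_E2 n q hq0
    have h2 : ((n * (n - (n/q + 1)) : ℕ):ℝ) ≤ (E2 (myTuran n q) Finset.univ : ℝ) := by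
      exact_mod_cast h1
    refine le_trans ?_ h2
    rw [Nat.cast_mul]
    apply mul_le_mul_of_nonneg_left _ (Nat.cast_nonneg n)
    rcases le_or_gt (n/q + 1) n with h | h
    · rw [Nat.cast_sub h, Nat.cast_add, Nat.cast_one]
      linarith
    · have h3 : n - (n/q+1) = 0 := by omega
      rw [h3, Nat.cast_zero]
      have h4 : (n:ℝ) ≤ ((n/q : ℕ):ℝ) + 1 := by
        have h5 : n ≤ n/q + 1 := by omega
        have h6 : ((n:ℕ):ℝ) ≤ ((n/q + 1 : ℕ):ℝ) := Nat.cast_le.2 h5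
        push_cast at h6
        linarith
      linarith
  have h2exT : 2 * ((ecard (myTuran n q) : ℕ):ℝ) = (E2 (myTuran n q) Finset.univ : ℝ) := by
    exact_mod_cast congrArg (fun k : ℕ => (k:ℝ)) (two_mul_ecard (myTuran n q))
  have hdivq : ((n/q : ℕ):ℝ) ≤ (n:ℝ)/(q:ℝ) := Nat.cast_div_le
  have hεq : 2 ≤ ε * (q:ℝ) * ((n:ℝ)-1) := by
    have h1 : ((N₂:ℕ):ℝ) ≤ (n:ℝ) := Nat.cast_le.2 hnN₂
    have h2 : 2/ε ≤ (⌈2/ε⌉₊ : ℝ) := Nat.le_ceil _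
    have h3 : (⌈2/ε⌉₊ : ℝ) + 2 ≤ (n:ℝ) := by
      rw [hN₂_def] at h1
      push_cast at h1
      linarith
    have h4 : 2/ε ≤ (n:ℝ) - 1 := by linarith
    rw [div_le_iff₀ hε] at h4
    have h5 : 0 ≤ (n:ℝ) - 1 := by linarith
    nlinarith
  have hLB : (1 - 1/(q:ℝ) - ε/2) * ((n.choose 2 : ℕ):ℝ) ≤ ((exNum n F : ℕ):ℝ) := by
    rw [hchoose]
    have hu : (1/(q:ℝ)) * q = 1 := by field_simp
    have hndivq : (n:ℝ)/(q:ℝ) = (n:ℝ) * (1/(q:ℝ)) := by ring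
    have h8 : 2 * (1/(q:ℝ)) ≤ ε * ((n:ℝ)-1) := by
      have h9 : (0:ℝ) ≤ 1/(q:ℝ) := by positivity
      nlinarith [hεq, hu, h9]
    have key : (1 - 1/(q:ℝ) - ε/2) * ((n:ℝ)*((n:ℝ)-1)) ≤
        (n:ℝ)*((n:ℝ) - (n:ℝ)/(q:ℝ) - 1) := by
      rw [hndivq]
      nlinarith [h8, hn2R, hε]
    have hmono : (n:ℝ)*((n:ℝ) - (n:ℝ)/(q:ℝ) - 1) ≤ (n:ℝ)*((n:ℝ) - ((n/q : ℕ):ℝ) - 1) := by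
      apply mul_le_mul_of_nonneg_left _ (Nat.cast_nonneg n)
      linarith [hdivq]
    linarith [key, hmono, hE2T, h2exT, hTleR]
  have hdist : |((exNum n F : ℕ):ℝ)/((n.choose 2 : ℕ):ℝ) - (1 - 1/(q:ℝ))| < ε := by
    rw [abs_sub_lt_iff]
    constructor
    · have h1 : ((exNum n F : ℕ):ℝ)/((n.choose 2 : ℕ):ℝ) ≤ 1 - 1/(q:ℝ) + ε/2 :=
        (div_le_iff₀ hchoosePos).2 (by linarith [hUB])
      linarith
    · have h1 : 1 - 1/(q:ℝ) - ε/2 ≤ ((exNum n F : ℕ):ℝ)/((n.choose 2 : ℕ):ℝ) :=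
        (le_div_iff₀ hchoosePos).2 (by linarith [hLB])
      linarith
  show dist (((exNum n F : ℕ):ℝ)/((n.choose 2 : ℕ):ℝ)) (1 - 1/(q:ℝ)) < ε
  rw [Real.dist_eq]
  exact hdist
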